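/- Let U_{n;c} = U_n + c·U_{n−1}. For c ≠ 0 with (n+1)² ≠ (cn)²: disc(U_{n;c}) = 2^{n(n−1)} (2n+1)^n (−c)^n / ((n+1)² − (cn)²) · U_{n;c}(−(nc² + n + 1)/((2n+1)c)). -/

import Mathlib

open Polynomial Polynomial.Chebyshev

/-- The resultant: `Res f g = lc(f)^(deg g) * ∏_{α root of f} g(α)`. -/
noncomputable def Res (f g : Polynomial ℂ) : ℂ :=
  f.leadingCoeff ^ g.natDegree * (f.roots.map (fun a => g.eval a)).prod

/-- The discriminant of a polynomial. -/
noncomputable def disc (f : Polynomial ℂ) : ℂ :=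
  (-1) ^ (f.natDegree * (f.natDegree - 1) / 2) / f.leadingCoeff * Res f (derivative f)

lemma two_eq_C : (2 : ℂ[X]) = C 2 := by simp [map_ofNat]

lemma u_info (k : ℕ) : (U ℂ (k:ℤ)).natDegree ≤ k ∧ (U ℂ (k:ℤ)).coeff k = 2^k := by
  induction k using Nat.strong_induction_on with
  | _ k ih =>
    match k with
    | 0 => simp [U_zero]
    | 1 =>
      refine ⟨by simp [U_one], ?_⟩
      have : (U ℂ ((1:ℕ):ℤ)) = 2 * X := by norm_num [U_one]
      rw [this, two_eq_C, coeff_C_mul, coeff_X_one]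
      norm_num
    | (k+2) =>
      have h : U ℂ ((k:ℤ)+2) = 2 * X * U ℂ ((k:ℤ)+1) - U ℂ (k:ℤ) := U_add_two ℂ (k : ℤ)
      have hcast : ((k:ℤ)+2) = (((k+2 : ℕ)):ℤ) := by push_cast; ring
      have hcast1 : ((k:ℤ)+1) = (((k+1 : ℕ)):ℤ) := by push_cast; ring
      rw [hcast, hcast1] at h
      have h1 := ih (k+1) (by omega)
      have h0 := ih k (by omega)
      constructor
      · rw [h]
        refine (natDegree_sub_le _ _).trans (max_le ?_ (by omega))
        refine (natDegree_mul_le).trans ?_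
        have : (2 * X : ℂ[X]).natDegree ≤ 1 := by
          simpa using natDegree_mul_le (p := (2:ℂ[X])) (q := X) |>.trans (by simp)
        omega
      · rw [h, coeff_sub, two_eq_C, mul_assoc, coeff_C_mul, coeff_X_mul, h1.2,
          coeff_eq_zero_of_natDegree_lt (lt_of_le_of_lt h0.1 (by omega))]
        ring

lemma u_natDegree (k : ℕ) : (U ℂ (k:ℤ)).natDegree = k :=
  le_antisymm (u_info k).1 (le_natDegree_of_ne_zero (by rw [(u_info k).2]; exact pow_ne_zero _ two_ne_zero))

lemma u_leadingCoeff (k : ℕ) : (U ℂ (k:ℤ)).leadingCoeff = 2^k := by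
  rw [leadingCoeff, u_natDegree, (u_info k).2]

lemma u_ne_zero (k : ℕ) : (U ℂ (k:ℤ)) ≠ 0 := by
  intro h
  have := u_leadingCoeff k
  rw [h] at this
  simp only [h, leadingCoeff_zero] at this
  exact (pow_ne_zero k (two_ne_zero (α := ℂ))) this.symm

lemma u_eval_one (k : ℕ) : (U ℂ (k:ℤ)).eval 1 = k + 1 := by
  induction k using Nat.strong_induction_on with
  | _ k ih =>
    match k with
    | 0 => simp [U_zero]
    | 1 => norm_num [U_one]
    | (k+2) =>
      have h : U ℂ ((k:ℤ)+2) = 2 * X * U ℂ ((k:ℤ)+1) - U ℂ (k:ℤ) := U_add_two ℂ (k : ℤ)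
      have hcast : ((k:ℤ)+2) = (((k+2 : ℕ)):ℤ) := by push_cast; ring
      have hcast1 : ((k:ℤ)+1) = (((k+1 : ℕ)):ℤ) := by push_cast; ring
      rw [hcast, hcast1] at h
      rw [h]
      simp only [eval_sub, eval_mul, eval_ofNat, eval_X, ih (k+1) (by omega), ih k (by omega)]
      push_cast; ring

lemma u_eval_negone (k : ℕ) : (U ℂ (k:ℤ)).eval (-1) = (-1)^k * (k + 1) := by
  induction k using Nat.strong_induction_on with
  | _ k ih =>
    match k with
    | 0 => simp [U_zero]
    | 1 => norm_num [U_one]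
    | (k+2) =>
      have h : U ℂ ((k:ℤ)+2) = 2 * X * U ℂ ((k:ℤ)+1) - U ℂ (k:ℤ) := U_add_two ℂ (k : ℤ)
      have hcast : ((k:ℤ)+2) = (((k+2 : ℕ)):ℤ) := by push_cast; ring
      have hcast1 : ((k:ℤ)+1) = (((k+1 : ℕ)):ℤ) := by push_cast; ring
      rw [hcast, hcast1] at h
      rw [h]
      simp only [eval_sub, eval_mul, eval_ofNat, eval_X, ih (k+1) (by omega), ih k (by omega)]
      push_cast; ring
open Polynomial Polynomial.Chebyshev

lemma roots_card_eq (p : ℂ[X]) (h : p ≠ 0) : p.roots.card = p.natDegree :=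
  splits_iff_card_roots.mp (IsAlgClosed.splits p)

lemma eval_eq_lc_prod (p : ℂ[X]) (a : ℂ) :
    p.eval a = p.leadingCoeff * (p.roots.map (fun b => a - b)).prod := by
  conv_lhs => rw [(IsAlgClosed.splits p).eq_prod_roots]
  simp [eval_multiset_prod, Multiset.map_map]

lemma prod_swap_ms (s t : Multiset ℂ) (h : ℂ → ℂ → ℂ) :
    (s.map (fun a => (t.map (h a)).prod)).prod
      = (t.map (fun b => (s.map (fun a => h a b)).prod)).prod := by
  induction s using Multiset.induction with
  | empty => simp
  | cons a s ih => simp [Multiset.prod_map_mul, ih]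

lemma prod_map_neg' (s : Multiset ℂ) (g : ℂ → ℂ) :
    (s.map (fun a => -(g a))).prod = (-1)^s.card * (s.map g).prod := by
  induction s using Multiset.induction with
  | empty => simp
  | cons a s ih => simp [ih]; ring

lemma prod_map_const_mul (s : Multiset ℂ) (k : ℂ) (g : ℂ → ℂ) :
    (s.map (fun a => k * g a)).prod = k ^ s.card * (s.map g).prod := by
  induction s using Multiset.induction with
  | empty => simp
  | cons a s ih => simp [ih]; ring

lemma res_swap (p q : ℂ[X]) (hp : p ≠ 0) (hq : q ≠ 0) :
    p.leadingCoeff ^ q.natDegree * (p.roots.map q.eval).prod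
      = (-1)^(p.natDegree * q.natDegree) *
        (q.leadingCoeff ^ p.natDegree * (q.roots.map p.eval).prod) := by
  have e1 : (p.roots.map q.eval).prod
      = q.leadingCoeff ^ p.natDegree *
        (p.roots.map (fun a => (q.roots.map (fun b => a - b)).prod)).prod := by
    rw [Multiset.map_congr rfl (fun a _ => eval_eq_lc_prod q a),
      prod_map_const_mul, roots_card_eq p hp]
  have e2 : (q.roots.map p.eval).prod
      = p.leadingCoeff ^ q.natDegree *
        (q.roots.map (fun b => (p.roots.map (fun a => b - a)).prod)).prod := by
    rw [Multiset.map_congr rfl (fun b _ => eval_eq_lc_prod p b),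
      prod_map_const_mul, roots_card_eq q hq]
  have e3 : (q.roots.map (fun b => (p.roots.map (fun a => b - a)).prod)).prod
      = (-1)^(p.natDegree * q.natDegree) *
        (p.roots.map (fun a => (q.roots.map (fun b => a - b)).prod)).prod := by
    have step1 : ∀ b : ℂ, (p.roots.map (fun a => b - a)).prod
        = (-1)^p.natDegree * (p.roots.map (fun a => a - b)).prod := by
      intro b
      rw [Multiset.map_congr rfl (fun a _ => (neg_sub a b).symm), prod_map_neg',
        roots_card_eq p hp]
    rw [Multiset.map_congr rfl (fun b _ => step1 b), prod_map_const_mul,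
      roots_card_eq q hq, prod_swap_ms q.roots p.roots (fun b a => a - b),
      prod_swap_ms p.roots q.roots (fun a b => a - b)]
    ring
  rw [e1, e2, e3]
  generalize (p.roots.map (fun a => (q.roots.map (fun b => a - b)).prod)).prod = P
  generalize hk : p.natDegree * q.natDegree = k
  generalize q.leadingCoeff ^ p.natDegree = A
  generalize p.leadingCoeff ^ q.natDegree = B
  have hs2 : ((-1:ℂ))^(k*2) = 1 := by
    rw [mul_comm, pow_mul, neg_one_sq, one_pow]
  linear_combination (-(A*B*P)) * hs2

lemma Pprod : ∀ m : ℕ, (((U ℂ (m:ℤ)).roots).map (U ℂ ((m:ℤ)+1)).eval).prod = (-1)^(m*(m+1)/2)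
  | 0 => by simp [U_zero]
  | (m+1) => by
    have hroots : ∀ b ∈ (U ℂ ((m+1:ℕ):ℤ)).roots,
        (U ℂ (((m+1:ℕ):ℤ)+1)).eval b = -((U ℂ (m:ℤ)).eval b) := by
      intro b hb
      have hb0 : (U ℂ ((m+1:ℕ):ℤ)).eval b = 0 := isRoot_of_mem_roots hb
      have h : U ℂ ((m:ℤ)+2) = 2 * X * U ℂ ((m:ℤ)+1) - U ℂ (m:ℤ) := U_add_two ℂ (m:ℤ)
      have hc1 : ((m:ℤ)+1) = ((m+1:ℕ):ℤ) := by push_cast; ring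
      have hc2 : ((m:ℤ)+2) = (((m+1:ℕ)):ℤ)+1 := by push_cast; ring
      rw [hc1, hc2] at h
      rw [h]
      simp only [eval_sub, eval_mul, eval_ofNat, eval_X, hb0]
      ring
    rw [Multiset.map_congr rfl hroots, prod_map_neg', roots_card_eq _ (u_ne_zero (m+1)),
      u_natDegree]
    -- now need: (-1)^(m+1) * ((U ℂ (m+1)).roots.map (U ℂ m).eval).prod = (-1)^((m+1)*(m+2)/2)
    have hswap := res_swap (U ℂ ((m+1:ℕ):ℤ)) (U ℂ (m:ℤ)) (u_ne_zero (m+1)) (u_ne_zero m)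
    rw [u_leadingCoeff, u_leadingCoeff, u_natDegree, u_natDegree] at hswap
    have hc1 : ((m:ℤ)+1) = ((m+1:ℕ):ℤ) := by push_cast; ring
    have hP := Pprod m
    rw [hc1] at hP
    rw [hP] at hswap
    have hpow : ((-1:ℂ))^((m+1)*m) = 1 := by
      rcases Nat.even_mul_succ_self m with ⟨t, ht⟩
      rw [mul_comm] at ht
      rw [ht, ← two_mul, pow_mul, neg_one_sq, one_pow]
    rw [hpow, one_mul] at hswap
    have h2 : ((2:ℂ)^(m+1))^m ≠ 0 := pow_ne_zero _ (pow_ne_zero _ two_ne_zero)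
    have hmain : ((U ℂ ((m+1:ℕ):ℤ)).roots.map (U ℂ (m:ℤ)).eval).prod = (-1:ℂ)^(m*(m+1)/2) := by
      have := hswap
      rw [show ((2:ℂ)^m)^(m+1) = ((2:ℂ)^(m+1))^m by rw [← pow_mul, ← pow_mul, mul_comm]] at this
      exact mul_left_cancel₀ h2 this
    rw [hmain, ← pow_add]
    congr 1
    rcases Nat.even_mul_succ_self m with ⟨t, ht⟩
    have h2 : (m+1)*(m+1+1) = m*(m+1) + 2*(m+1) := by ring
    omega

theorem stmt_15 (n : ℕ) (hn : 2 ≤ n) (c : ℂ) (hc : c ≠ 0)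
    (hc1 : ((n : ℂ) + 1) ^ 2 ≠ (c * n) ^ 2) :
    disc (U ℂ n + C c * U ℂ ((n : ℤ) - 1)) =
      2 ^ (n * (n - 1)) * (2 * (n : ℂ) + 1) ^ n * (-c) ^ n /
          (((n : ℂ) + 1) ^ 2 - (c * n) ^ 2) *
        (U ℂ n + C c * U ℂ ((n : ℤ) - 1)).eval
          (-((n : ℂ) * c ^ 2 + n + 1) / ((2 * (n : ℂ) + 1) * c)) := by
  have hm : ((n:ℤ) - 1) = ((n-1:ℕ):ℤ) := by omega
  have hmc : ((n-1:ℕ):ℂ) = (n:ℂ) - 1 := by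
    push_cast [Nat.cast_sub (by omega : 1 ≤ n)]; ring
  set x₀ : ℂ := -((n : ℂ) * c ^ 2 + n + 1) / ((2 * (n : ℂ) + 1) * c) with hx₀
  set f : ℂ[X] := U ℂ (n:ℤ) + C c * U ℂ ((n:ℤ) - 1) with hfdef
  have h2n1 : (2*(n:ℂ)+1) ≠ 0 := by
    have : ((2*n+1:ℕ):ℂ) ≠ 0 := Nat.cast_ne_zero.mpr (by omega)
    push_cast at this
    exact this
  have hΔ : ((n:ℂ)+1)^2 - (c*n)^2 ≠ 0 := sub_ne_zero.mpr hc1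
  -- degree and leading coefficient of f
  have hcoefn : f.coeff n = 2^n := by
    rw [hfdef, coeff_add, coeff_C_mul, hm]
    rw [(u_info n).2, coeff_eq_zero_of_natDegree_lt (lt_of_le_of_lt (u_info (n-1)).1 (by omega))]
    ring
  have hdle : f.natDegree ≤ n := by
    rw [hfdef]
    refine (natDegree_add_le _ _).trans (max_le (by rw [u_natDegree]) ?_)
    refine (natDegree_mul_le).trans ?_
    rw [hm, u_natDegree, natDegree_C]
    omega
  have hfd : f.natDegree = n :=
    le_antisymm hdle (le_natDegree_of_ne_zero (by rw [hcoefn]; exact pow_ne_zero _ two_ne_zero))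
  have hflc : f.leadingCoeff = 2^n := by rw [leadingCoeff, hfd, hcoefn]
  have hf0 : f ≠ 0 := fun h => (pow_ne_zero n (two_ne_zero (α := ℂ)))
    (by rw [← hflc, h, leadingCoeff_zero])
  have hcard : f.roots.card = n := by rw [roots_card_eq f hf0, hfd]
  -- evaluations of f
  have hone : f.eval 1 = (n:ℂ) + 1 + c * n := by
    rw [hfdef]
    simp only [eval_add, eval_mul, eval_C, hm, u_eval_one, hmc]
    ring
  have hnegone : f.eval (-1) = (-1:ℂ)^n * (((n:ℂ) + 1) - c * n) := by
    rw [hfdef]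
    simp only [eval_add, eval_mul, eval_C, hm, u_eval_negone, hmc]
    have hp : ((-1:ℂ))^n = (-1)^(n-1) * (-1) := by
      rw [← pow_succ]
      congr 1
      omega
    rw [hp]
    ring
  have hone0 : f.eval 1 ≠ 0 := by
    rw [hone]
    intro h
    exact hc1 (by linear_combination ((n:ℂ)+1-c*n) * h)
  have hnegone0 : f.eval (-1) ≠ 0 := by
    rw [hnegone]
    intro h
    rcases mul_eq_zero.mp h with h' | h'
    · exact pow_ne_zero n (neg_ne_zero.mpr one_ne_zero) h'
    · exact hc1 (by linear_combination ((n:ℂ)+1+c*n) * h')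
  -- derivative identity
  have hdf : derivative f = derivative (U ℂ (n:ℤ)) + C c * derivative (U ℂ ((n:ℤ)-1)) := by
    rw [hfdef, derivative_add, derivative_C_mul]
  have hD : (1 - X^2) * derivative f
      = (((n:ℤ):ℂ[X])+1) * (1 + C c * X) * U ℂ ((n:ℤ)-1)
        - ((n:ℤ):ℂ[X]) * (X + C c) * U ℂ (n:ℤ) := by
    rw [hdf]
    have h1 := add_one_mul_T_eq_poly_in_U (R := ℂ) (n:ℤ)
    have h2 := add_one_mul_T_eq_poly_in_U (R := ℂ) ((n:ℤ)-1)
    rw [show ((n:ℤ)-1)+1 = (n:ℤ) by ring] at h2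
    push_cast at h2
    have h3 := T_eq_U_sub_X_mul_U ℂ ((n:ℤ)+1)
    rw [show ((n:ℤ)+1)-1 = (n:ℤ) by ring] at h3
    have h4 := T_eq_U_sub_X_mul_U ℂ (n:ℤ)
    have h5 := U_add_one ℂ (n:ℤ)
    linear_combination h1 + C c * h2 - (((n:ℤ):ℂ[X])+1) * h3 - C c * ((n:ℤ):ℂ[X]) * h4
      - (((n:ℤ):ℂ[X])+1) * h5
  -- per-root identity
  have hroot : ∀ a ∈ f.roots, (1 - a^2) * (derivative f).eval a
      = ((2*(n:ℂ)+1)*c) * ((a - x₀) * (U ℂ ((n:ℤ)-1)).eval a) := by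
    intro a ha
    have ha0 : (U ℂ (n:ℤ)).eval a + c * (U ℂ ((n:ℤ)-1)).eval a = 0 := by
      have := isRoot_of_mem_roots ha
      rw [IsRoot, hfdef] at this
      simpa using this
    have hev := congrArg (eval a) hD
    simp only [eval_mul, eval_sub, eval_add, eval_one, eval_pow, eval_X, eval_intCast,
      eval_C, eval_natCast, Int.cast_natCast] at hev
    push_cast at hev
    have hx : ((2*(n:ℂ)+1)*c) * (a - x₀) = (2*(n:ℂ)+1)*c*a + ((n:ℂ)*c^2 + n + 1) := by
      rw [hx₀]
      field_simp
      ring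
    rw [← mul_assoc, hx]
    linear_combination hev - (n:ℂ)*(a+c)*ha0
  -- product over roots of the per-root identity
  have key : ((f.roots.map (fun a => 1 - a^2)).prod) * ((f.roots.map (fun a => (derivative f).eval a)).prod)
      = ((2*(n:ℂ)+1)*c)^n * (((f.roots.map (fun a => a - x₀)).prod) * ((f.roots.map (fun a => (U ℂ ((n:ℤ)-1)).eval a)).prod)) := by
    rw [← Multiset.prod_map_mul, Multiset.map_congr rfl hroot, prod_map_const_mul, hcard,
      Multiset.prod_map_mul]
  -- pieces
  have e1 : f.eval 1 = 2^n * (f.roots.map (fun b => 1 - b)).prod := by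
    rw [eval_eq_lc_prod, hflc]
  have e2 : f.eval (-1) = 2^n * (f.roots.map (fun b => -1 - b)).prod := by
    rw [eval_eq_lc_prod, hflc]
  have e3 : f.eval x₀ = 2^n * (f.roots.map (fun b => x₀ - b)).prod := by
    rw [eval_eq_lc_prod, hflc]
  have p1 : (f.roots.map (fun a => 1 - a^2)).prod
      = (f.roots.map (fun b => 1 - b)).prod * ((-1:ℂ)^n * (f.roots.map (fun b => -1 - b)).prod) := by
    have hcg : ∀ a ∈ f.roots, 1 - a^2 = (fun b => 1 - b) a * (-((fun b => -1 - b) a)) :=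
      fun a _ => by simp; ring
    rw [Multiset.map_congr rfl hcg, Multiset.prod_map_mul, prod_map_neg', hcard]
  have p2 : (f.roots.map (fun a => a - x₀)).prod
      = (-1:ℂ)^n * (f.roots.map (fun b => x₀ - b)).prod := by
    have hcg : ∀ a ∈ f.roots, a - x₀ = -((fun b => x₀ - b) a) := fun a _ => by simp
    rw [Multiset.map_congr rfl hcg, prod_map_neg', hcard]
  have p3 : (f.roots.map (fun a => (U ℂ ((n:ℤ)-1)).eval a)).prod = (-1:ℂ)^((n-1)*n/2) := by
    rw [hm]
    have hum : U ℂ ((n-1:ℕ):ℤ) ≠ 0 := u_ne_zero (n-1)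
    have hswap := res_swap f (U ℂ ((n-1:ℕ):ℤ)) hf0 hum
    rw [hflc, hfd, u_natDegree, u_leadingCoeff] at hswap
    have hsign : ((-1:ℂ))^(n*(n-1)) = 1 := Even.neg_one_pow (Nat.even_mul_pred_self n)
    rw [hsign, one_mul] at hswap
    have hfv : ∀ b ∈ (U ℂ ((n-1:ℕ):ℤ)).roots, f.eval b = (U ℂ (n:ℤ)).eval b := by
      intro b hb
      have hb0 : (U ℂ ((n-1:ℕ):ℤ)).eval b = 0 := isRoot_of_mem_roots hb
      rw [hfdef, hm]
      simp [hb0]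
    rw [Multiset.map_congr rfl hfv] at hswap
    have hP := Pprod (n-1)
    rw [show (((n-1:ℕ)):ℤ)+1 = (n:ℤ) by omega] at hP
    rw [hP] at hswap
    rw [show (n-1)*((n-1)+1)/2 = (n-1)*n/2 by rw [show (n-1)+1 = n by omega]] at hswap
    have h2 : ((2:ℂ)^n)^(n-1) ≠ 0 := pow_ne_zero _ (pow_ne_zero _ two_ne_zero)
    refine mul_left_cancel₀ h2 ?_
    rw [hswap, show ((2:ℂ)^(n-1))^n = ((2:ℂ)^n)^(n-1) by rw [← pow_mul, ← pow_mul, mul_comm]]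
  -- derivative degree
  have hdd : (derivative f).natDegree = n - 1 := by
    refine le_antisymm ((natDegree_derivative_le f).trans (by omega)) ?_
    refine le_natDegree_of_ne_zero ?_
    rw [coeff_derivative, show (n-1)+1 = n by omega, hcoefn]
    refine mul_ne_zero (pow_ne_zero _ two_ne_zero) ?_
    have : (((n-1)+1:ℕ):ℂ) ≠ 0 := Nat.cast_ne_zero.mpr (by omega)
    push_cast at this ⊢
    convert this using 2
  -- assemble
  have e1 : (f.roots.map (fun b => 1 - b)).prod = f.eval 1 / 2^n := by
    rw [eval_eq_lc_prod f 1, hflc]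
    field_simp
  have e2 : (f.roots.map (fun b => -1 - b)).prod = f.eval (-1) / 2^n := by
    rw [eval_eq_lc_prod f (-1), hflc]
    field_simp
  have e3 : (f.roots.map (fun b => x₀ - b)).prod = f.eval x₀ / 2^n := by
    rw [eval_eq_lc_prod f x₀, hflc]
    field_simp
  rw [p1, p2, p3, e1, e2, e3, hone, hnegone] at key
  simp only [disc, Res]
  rw [hflc, hfd, hdd]
  rw [show (n-1)*n/2 = n*(n-1)/2 by rw [Nat.mul_comm]] at key
  rw [pow_mul, neg_pow]
  generalize (Multiset.map (fun a => Polynomial.eval a (Polynomial.derivative f)) f.roots).prod = A at key ⊢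
  have hs : ((-1:ℂ))^(n*(n-1)/2) * (-1)^(n*(n-1)/2) = 1 := by
    rw [← pow_add]; exact Even.neg_one_pow ⟨_, rfl⟩
  have hee : ((-1:ℂ))^n * (-1)^n = 1 := by
    rw [← pow_add]; exact Even.neg_one_pow ⟨_, rfl⟩
  have ht : (2:ℂ)^n ≠ 0 := pow_ne_zero _ two_ne_zero
  rw [mul_pow] at key
  field_simp at key
  have key3 : (((n:ℂ)+1)^2 - (c*(n:ℂ))^2) * A * 2^n
      = (2*(n:ℂ)+1)^n * c^n * (-1)^n * eval x₀ f * (-1)^(n*(n-1)/2) * 2^n * 2^n := by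
    linear_combination (-1:ℂ)^n * 2^n * key - (((n:ℂ)+1)^2 - (c*(n:ℂ))^2) * A * 2^n * hee
  have key4 : (((n:ℂ)+1)^2 - (c*(n:ℂ))^2) * A
      = (2*(n:ℂ)+1)^n * c^n * (-1)^n * eval x₀ f * (-1)^(n*(n-1)/2) * 2^n := by
    apply mul_right_cancel₀ ht
    linear_combination key3
  rw [div_mul_eq_mul_div, div_mul_eq_mul_div, div_eq_div_iff ht hΔ]
  linear_combination ((-1:ℂ)^(n*(n-1)/2) * ((2:ℂ)^n)^(n-1)) * key4
    + (((2:ℂ)^n)^(n-1) * (2*(n:ℂ)+1)^n * (-1:ℂ)^n * c^n * (eval x₀ f) * 2^n) * hs
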